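/- Suppose fluc(t) ≤ γ(t) for all t. Then the cumulated expected losses of the FPL algorithm PROT and of the IFPL algorithm satisfy, for all T: l_{1:T} ≤ r_{1:T} + 2(e^{3/a} − 1) · Σ_{t=1}^T γ(t)^{1−α_t}·Δv_t. -/

import Mathlib

open MeasureTheory ProbabilityTheory Filter Finset

noncomputable section

/-- Cumulative loss `s^i_{1:t}` of expert `i` after step `t`. -/
def cumLoss {N : ℕ} (s : ℕ → Fin N → ℝ) (t : ℕ) (i : Fin N) : ℝ :=
  ∑ j ∈ Finset.Icc 1 t, s j i

/-- Volume of the game: `v_t = v_0 + ∑_{j=1}^t max_i |s^i_j|`. -/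
def vol {N : ℕ} (s : ℕ → Fin N → ℝ) (v0 : ℝ) (t : ℕ) : ℝ :=
  v0 + ∑ j ∈ Finset.Icc 1 t, ⨆ i, |s j i|

/-- `Δv_t = v_t - v_{t-1}`. -/
def dvol {N : ℕ} (s : ℕ → Fin N → ℝ) (v0 : ℝ) (t : ℕ) : ℝ :=
  vol s v0 t - vol s v0 (t - 1)

/-- The scaled fluctuation `fluc(t) = Δv_t / v_t`. -/
def fluc {N : ℕ} (s : ℕ → Fin N → ℝ) (v0 : ℝ) (t : ℕ) : ℝ :=
  dvol s v0 t / vol s v0 t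

/-- The constant `A = 2(e^{3/a} - 1)/(a(1 + ln N))`. -/
def Aconst (N : ℕ) (a : ℝ) : ℝ :=
  2 * (Real.exp (3 / a) - 1) / (a * (1 + Real.log N))

/-- `α_t = (1/2)(1 - ln(A⁻¹)/ln γ(t))`. -/
def alphat (N : ℕ) (a : ℝ) (γ : ℕ → ℝ) (t : ℕ) : ℝ :=
  (1 / 2) * (1 - Real.log (Aconst N a)⁻¹ / Real.log (γ t))

/-- `μ_t = a · γ(t)^{α_t}`. -/
def muPROT (N : ℕ) (a : ℝ) (γ : ℕ → ℝ) (t : ℕ) : ℝ :=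
  a * γ t ^ alphat N a γ t

/-- The learning rate `ε_t = 1/(μ_t v_{t-1})` of the algorithm PROT. -/
def epst {N : ℕ} (s : ℕ → Fin N → ℝ) (v0 a : ℝ) (γ : ℕ → ℝ) (t : ℕ) : ℝ :=
  1 / (muPROT N a γ t * vol s v0 (t - 1))

/-- A run of the FPL algorithm PROT: `P` is a probability measure, `ξ` are i.i.d.
exponentially distributed (rate 1) perturbations, sampled once, and at each step
`t ≥ 1` the algorithm follows the expert `I t ω` minimizing the perturbed
cumulative loss `s^i_{1:t-1} - ξ^i/ε_t`. -/
def ProtRun {N : ℕ} (s : ℕ → Fin N → ℝ) (v0 a : ℝ) (γ : ℕ → ℝ)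
    (Ω : Type) [MeasurableSpace Ω] (P : Measure Ω)
    (ξ : Fin N → Ω → ℝ) (I : ℕ → Ω → Fin N) : Prop :=
  IsProbabilityMeasure P ∧
  (∀ i, Measurable (ξ i)) ∧
  iIndepFun ξ P ∧
  (∀ i, P.map (ξ i) = expMeasure 1) ∧
  (∀ t, Measurable (I t)) ∧
  (∀ t, 1 ≤ t → ∀ (ω : Ω) (i : Fin N),
    cumLoss s (t - 1) (I t ω) - ξ (I t ω) ω / epst s v0 a γ t
      ≤ cumLoss s (t - 1) i - ξ i ω / epst s v0 a γ t)

/-- The learning rate `ε'_t = 1/(μ_t v_t)` of the IFPL algorithm. -/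
def epstIFPL {N : ℕ} (s : ℕ → Fin N → ℝ) (v0 a : ℝ) (γ : ℕ → ℝ) (t : ℕ) : ℝ :=
  1 / (muPROT N a γ t * vol s v0 t)

lemma expMeasure_singleton (m : ℝ) : expMeasure 1 {m} = 0 := by
  have h : expMeasure 1 ≪ volume := by
    rw [expMeasure, gammaMeasure]
    exact withDensity_absolutelyContinuous _ _
  exact h (measure_singleton m)

lemma expMeasure_Iic (m : ℝ) :
    expMeasure 1 (Set.Iic m) = ENNReal.ofReal (if 0 ≤ m then 1 - Real.exp (-m) else 0) := by
  rw [expMeasure, gammaMeasure, withDensity_apply _ measurableSet_Iic]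
  have := lintegral_exponentialPDF_eq_antiDeriv (r := 1) one_pos m
  simpa [exponentialPDF, exponentialPDFReal, gammaPDF] using this

lemma expMeasure_Ici (m : ℝ) :
    expMeasure 1 (Set.Ici m) = ENNReal.ofReal (Real.exp (-(max m 0))) := by
  haveI : IsProbabilityMeasure (expMeasure 1) := isProbabilityMeasure_expMeasure one_pos
  have hIio : expMeasure 1 (Set.Iio m) = ENNReal.ofReal (if 0 ≤ m then 1 - Real.exp (-m) else 0) := by
    have h1 : expMeasure 1 (Set.Iic m) = expMeasure 1 (Set.Iio m) + expMeasure 1 {m} := by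
      rw [← measure_union (by simp) (measurableSet_singleton m), Set.Iio_union_right]
    rw [expMeasure_singleton, add_zero] at h1
    rw [← h1, expMeasure_Iic]
  have hc : expMeasure 1 (Set.Ici m) = 1 - expMeasure 1 (Set.Iio m) := by
    rw [← Set.compl_Iio, measure_compl measurableSet_Iio (measure_ne_top _ _), measure_univ]
  rw [hc, hIio]
  by_cases h : 0 ≤ m
  · rw [if_pos h, max_eq_left h]
    rw [ENNReal.sub_eq_of_eq_add (by simp)]
    rw [← ENNReal.ofReal_add (by positivity) (by simp [Real.exp_le_one_iff]; positivity)]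
    norm_num
  · rw [if_neg h, max_eq_right (le_of_not_ge h)]
    simp

/-- product of exponential measures on `Fin n → ℝ` -/
def expPi (n : ℕ) : Measure (Fin n → ℝ) := Measure.pi fun _ => expMeasure 1

lemma tail_ratio (Mp Mq c : ℝ) (hc0 : 0 ≤ c) (hM : Mq ≤ Mp + 2 * c) :
    ENNReal.ofReal (Real.exp (-(2 * c))) * ENNReal.ofReal (Real.exp (-(max Mp 0)))
      ≤ ENNReal.ofReal (Real.exp (-(max Mq 0))) := by
  have hmax : max Mq 0 ≤ max Mp 0 + 2 * c := by
    rcases le_total Mq 0 with h | h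
    · rw [max_eq_right h]; positivity
    · rw [max_eq_left h]
      exact le_trans hM (add_le_add_left (le_max_left _ _) _)
  rw [← ENNReal.ofReal_mul (by positivity), ← Real.exp_add]
  apply ENNReal.ofReal_le_ofReal
  apply Real.exp_le_exp.2
  linarith

instance expPi_prob (n : ℕ) : IsProbabilityMeasure (expPi n) := by
  haveI : IsProbabilityMeasure (expMeasure 1) := isProbabilityMeasure_expMeasure one_pos
  unfold expPi
  infer_instance

/-- the event that expert `i` is a perturbed leader for loss vector `φ` -/
def Bset {N : ℕ} (φ : Fin N → ℝ) (i : Fin N) : Set (Fin N → ℝ) :=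
  {x | ∀ j, φ i - x i ≤ φ j - x j}

lemma Bset_measurable {N : ℕ} (φ : Fin N → ℝ) (i : Fin N) : MeasurableSet (Bset φ i) := by
  have : Bset φ i = ⋂ j, {x : Fin N → ℝ | φ i - x i ≤ φ j - x j} := by
    ext x; simp [Bset, Set.mem_iInter]
  rw [this]
  exact MeasurableSet.iInter fun j =>
    measurableSet_le (measurable_const.sub (measurable_pi_apply i))
      (measurable_const.sub (measurable_pi_apply j))

lemma Bset_slice {n : ℕ} (φ : Fin (n + 2) → ℝ) (i : Fin (n + 2)) :
    expPi (n + 2) (Bset φ i)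
      = ∫⁻ y : Fin (n + 1) → ℝ,
          ENNReal.ofReal (Real.exp (-(max (Finset.univ.sup'
            Finset.univ_nonempty (fun j => y j + φ i - φ (i.succAbove j))) 0))) ∂ expPi (n + 1) := by
  haveI : IsProbabilityMeasure (expMeasure 1) := isProbabilityMeasure_expMeasure one_pos
  simp only [expPi]
  set e := MeasurableEquiv.piFinSuccAbove (fun _ : Fin (n + 2) => ℝ) i with he
  have hmp := measurePreserving_piFinSuccAbove (fun _ : Fin (n + 2) => expMeasure 1) i
  have hB := Bset_measurable φ i
  have hS : MeasurableSet (e.symm ⁻¹' (Bset φ i)) := e.symm.measurable hB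
  have h1 : expPi (n + 2) (Bset φ i)
      = ((expMeasure 1).prod (expPi (n + 1))) (e.symm ⁻¹' (Bset φ i)) := by
    simp only [expPi]
    rw [← hmp.map_eq, MeasurableEquiv.map_apply]
    congr 1
    ext x
    simp only [Set.mem_preimage, ← he, e.symm_apply_apply]
  simp only [expPi] at h1
  rw [h1, Measure.prod_apply_symm hS]
  congr 1
  funext y
  have h2 : ((fun x0 : ℝ => (x0, y)) ⁻¹' (e.symm ⁻¹' (Bset φ i)))
      = Set.Ici (Finset.univ.sup' Finset.univ_nonempty
          (fun j => y j + φ i - φ (i.succAbove j))) := by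
    ext x0
    simp only [Set.mem_preimage, Set.mem_Ici, Bset, Set.mem_setOf_eq]
    have hsymm : e.symm (x0, y) = i.insertNth x0 y := rfl
    rw [hsymm]
    rw [Fin.forall_iff_succAbove i]
    simp only [Fin.insertNth_apply_same, Fin.insertNth_apply_succAbove]
    constructor
    · rintro ⟨-, h⟩
      rw [Finset.sup'_le_iff]
      intro j _
      have := h j
      linarith
    · intro h
      refine ⟨le_refl _, fun j => ?_⟩
      have := Finset.le_sup' (fun j => y j + φ i - φ (i.succAbove j)) (Finset.mem_univ j)
      have h2 := le_trans this h
      linarith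
  rw [h2, expMeasure_Ici]

lemma Bset_ratio {n : ℕ} (φ ψ : Fin (n + 2) → ℝ) (c : ℝ) (hc : ∀ k, |φ k - ψ k| ≤ c)
    (i : Fin (n + 2)) :
    ENNReal.ofReal (Real.exp (-(2 * c))) * expPi (n + 2) (Bset φ i)
      ≤ expPi (n + 2) (Bset ψ i) := by
  have hc0 : 0 ≤ c := le_trans (abs_nonneg _) (hc i)
  rw [Bset_slice φ i, Bset_slice ψ i, ← lintegral_const_mul' _ _ ENNReal.ofReal_ne_top]
  refine lintegral_mono fun y => ?_
  refine tail_ratio _ _ c hc0 ?_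
  rw [Finset.sup'_le_iff]
  intro j _
  have h1 := Finset.le_sup' (fun j => y j + φ i - φ (i.succAbove j)) (Finset.mem_univ j)
  have h2 := abs_le.1 (hc i)
  have h3 := abs_le.1 (hc (i.succAbove j))
  have h1' : y j + φ i - φ (i.succAbove j)
      ≤ Finset.univ.sup' Finset.univ_nonempty (fun j => y j + φ i - φ (i.succAbove j)) := h1
  linarith

lemma tie_null {n : ℕ} (i j : Fin (n + 2)) (hij : j ≠ i) (c : ℝ) :
    expPi (n + 2) {x : Fin (n + 2) → ℝ | x i = x j + c} = 0 := by
  haveI : IsProbabilityMeasure (expMeasure 1) := isProbabilityMeasure_expMeasure one_pos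
  obtain ⟨j0, rfl⟩ := Fin.exists_succAbove_eq hij
  set T := {x : Fin (n + 2) → ℝ | x i = x (i.succAbove j0) + c} with hT
  have hTm : MeasurableSet T :=
    measurableSet_eq_fun (measurable_pi_apply i) (by fun_prop)
  set e := MeasurableEquiv.piFinSuccAbove (fun _ : Fin (n + 2) => ℝ) i with he
  have hmp := measurePreserving_piFinSuccAbove (fun _ : Fin (n + 2) => expMeasure 1) i
  have hS : MeasurableSet (e.symm ⁻¹' T) := e.symm.measurable hTm
  have h1 : expPi (n + 2) T = ((expMeasure 1).prod (expPi (n + 1))) (e.symm ⁻¹' T) := by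
    simp only [expPi]
    rw [← hmp.map_eq, MeasurableEquiv.map_apply]
    congr 1
    ext x
    simp only [Set.mem_preimage, ← he, e.symm_apply_apply]
  simp only [expPi] at h1
  rw [expPi, h1, Measure.prod_apply_symm hS]
  have : ∀ y : Fin (n + 1) → ℝ,
      ((fun x0 : ℝ => (x0, y)) ⁻¹' (e.symm ⁻¹' T)) = {y j0 + c} := by
    intro y
    ext x0
    have hsymm : e.symm (x0, y) = i.insertNth x0 y := rfl
    simp only [Set.mem_preimage, hsymm, hT, Set.mem_setOf_eq, Set.mem_singleton_iff,
      Fin.insertNth_apply_same, Fin.insertNth_apply_succAbove]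
  rw [lintegral_congr fun y => by rw [this y, expMeasure_singleton]]
  simp

lemma Bset_sum_one {n : ℕ} (φ : Fin (n + 2) → ℝ) :
    ∑ i, expPi (n + 2) (Bset φ i) = 1 := by
  have hcover : (⋃ i, Bset φ i) = Set.univ := by
    ext x
    simp only [Set.mem_iUnion, Set.mem_univ, iff_true]
    obtain ⟨i, -, hi⟩ := Finset.exists_min_image Finset.univ (fun j => φ j - x j)
      Finset.univ_nonempty
    exact ⟨i, fun j => hi j (Finset.mem_univ j)⟩
  have hdisj : Pairwise (Function.onFun (AEDisjoint (expPi (n + 2))) fun i => Bset φ i) := by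
    intro i j hij
    refine measure_mono_null ?_ (tie_null i j hij.symm (φ i - φ j))
    · rintro x ⟨hxi, hxj⟩
      have h1 : φ i - x i ≤ φ j - x j := hxi j
      have h2 : φ j - x j ≤ φ i - x i := hxj i
      have : φ i - x i = φ j - x j := le_antisymm h1 h2
      simp only [Set.mem_setOf_eq]
      linarith
  have hnm : ∀ i : Fin (n + 2), NullMeasurableSet (Bset φ i) (expPi (n + 2)) :=
    fun i => (Bset_measurable φ i).nullMeasurableSet
  have := measure_iUnion₀ hdisj hnm (μ := expPi (n + 2))
  rw [hcover] at this
  rw [← tsum_fintype (L := SummationFilter.unconditional _)]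
  rw [← this, measure_univ]

/-- probability that expert `i` is the perturbed leader -/
def pB {n : ℕ} (φ : Fin (n + 2) → ℝ) (i : Fin (n + 2)) : ℝ := (expPi (n + 2) (Bset φ i)).toReal

lemma pB_nonneg {n : ℕ} (φ : Fin (n + 2) → ℝ) (i : Fin (n + 2)) : 0 ≤ pB φ i :=
  ENNReal.toReal_nonneg

lemma pB_sum {n : ℕ} (φ : Fin (n + 2) → ℝ) : ∑ i, pB φ i = 1 := by
  have h := Bset_sum_one φ
  have hne : ∀ i ∈ Finset.univ, expPi (n + 2) (Bset φ i) ≠ ⊤ := fun i _ => measure_ne_top _ _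
  have := ENNReal.toReal_sum hne
  rw [h] at this
  simpa [pB] using this.symm

lemma pB_ratio {n : ℕ} (φ ψ : Fin (n + 2) → ℝ) (c : ℝ) (hc : ∀ k, |φ k - ψ k| ≤ c)
    (i : Fin (n + 2)) : Real.exp (-(2 * c)) * pB φ i ≤ pB ψ i := by
  have h := Bset_ratio φ ψ c hc i
  have h2 := ENNReal.toReal_mono (measure_ne_top _ _) h
  rw [ENNReal.toReal_mul, ENNReal.toReal_ofReal (Real.exp_nonneg _)] at h2
  exact h2

lemma pB_step {n : ℕ} (φ ψ : Fin (n + 2) → ℝ) (c : ℝ) (hc : ∀ k, |φ k - ψ k| ≤ c)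
    (i : Fin (n + 2)) : |pB ψ i - pB φ i| ≤ (Real.exp (2 * c) - 1) * pB φ i := by
  have hc0 : 0 ≤ c := le_trans (abs_nonneg _) (hc i)
  have h1 := pB_ratio φ ψ c hc i
  have h2 := pB_ratio ψ φ c (fun k => by rw [abs_sub_comm]; exact hc k) i
  have he : 0 < Real.exp (-(2 * c)) := Real.exp_pos _
  have hee : Real.exp (-(2 * c)) * Real.exp (2 * c) = 1 := by
    rw [← Real.exp_add]; simp
  have hp := pB_nonneg φ i
  have hq := pB_nonneg ψ i
  have hup : pB ψ i ≤ Real.exp (2 * c) * pB φ i := by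
    nlinarith [Real.exp_pos (2 * c)]
  have hdown : pB φ i - pB ψ i ≤ (1 - Real.exp (-(2 * c))) * pB φ i := by nlinarith
  have hkey : 1 - Real.exp (-(2 * c)) ≤ Real.exp (2 * c) - 1 := by
    nlinarith [Real.add_one_le_exp (2 * c), Real.add_one_le_exp (-(2 * c))]
  rw [abs_sub_le_iff]
  constructor <;> nlinarith

lemma exp_sub_one_le_quad {x : ℝ} (h1 : 0 ≤ x) (h2 : x ≤ 1) :
    Real.exp x - 1 ≤ x + x ^ 2 := by
  have h := Real.exp_bound' h1 h2 (n := 2) (by norm_num)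
  simp only [Finset.sum_range_succ, Finset.sum_range_zero] at h
  norm_num at h
  nlinarith

lemma key_compare {n : ℕ} (u w sv : Fin (n + 2) → ℝ) (Δ c : ℝ)
    (hΔ : ∀ i, |sv i| ≤ Δ) (hc : ∀ i, |u i - w i| ≤ c) :
    ∑ i, sv i * pB u i ≤ (∑ i, sv i * pB w i) + 3 * c * Δ := by
  have hc0 : 0 ≤ c := le_trans (abs_nonneg _) (hc 0)
  have hΔ0 : 0 ≤ Δ := le_trans (abs_nonneg _) (hΔ 0)
  set M : ℕ := ⌈(4 : ℝ) * c⌉₊ + 1 with hM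
  have hM1 : (1 : ℝ) ≤ (M : ℝ) := by exact_mod_cast Nat.one_le_iff_ne_zero.2 (by omega)
  have hM4c : 4 * c ≤ (M : ℝ) := le_trans (Nat.le_ceil _) (by exact_mod_cast Nat.le_succ _)
  have hMpos : (0 : ℝ) < M := by linarith
  set φk : ℕ → Fin (n + 2) → ℝ := fun k i => u i + ((k : ℝ) / M) * (w i - u i) with hφk
  have hφ0 : φk 0 = u := by funext i; simp [hφk]
  have hφM : φk M = w := by
    funext i; simp only [hφk]
    rw [div_self (ne_of_gt hMpos)]; ring
  have hstep : ∀ k : ℕ, ∀ i, |φk k i - φk (k + 1) i| ≤ c / M := by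
    intro k i
    have : φk k i - φk (k + 1) i = -(1 / M) * (w i - u i) := by
      simp only [hφk]; push_cast; ring
    rw [this, abs_mul, abs_neg, abs_of_nonneg (by positivity : (0:ℝ) ≤ 1 / (M:ℝ))]
    rw [div_eq_mul_inv c, mul_comm c, abs_sub_comm]
    rw [one_div]
    exact mul_le_mul_of_nonneg_left (hc i) (by positivity)
  set E : ℝ := Real.exp (2 * (c / M)) - 1 with hE
  have hEnn : 0 ≤ E := by
    simp only [hE, sub_nonneg, Real.one_le_exp_iff]; positivity
  have htele : ∀ i, |pB w i - pB u i| ≤ E * ∑ k ∈ Finset.range M, pB (φk k) i := by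
    intro i
    have hsum : pB w i - pB u i
        = ∑ k ∈ Finset.range M, (pB (φk (k + 1)) i - pB (φk k) i) := by
      rw [Finset.sum_range_sub (f := fun k => pB (φk k) i), hφ0, hφM]
    rw [hsum]
    refine le_trans (Finset.abs_sum_le_sum_abs _ _) ?_
    rw [Finset.mul_sum]
    refine Finset.sum_le_sum fun k _ => ?_
    exact pB_step (φk k) (φk (k + 1)) (c / M) (hstep k) i
  have hmain : ∑ i, sv i * pB u i - ∑ i, sv i * pB w i ≤ E * M * Δ := by
    rw [← Finset.sum_sub_distrib]
    calc ∑ i, (sv i * pB u i - sv i * pB w i)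
        ≤ ∑ i, Δ * (E * ∑ k ∈ Finset.range M, pB (φk k) i) := by
          refine Finset.sum_le_sum fun i _ => ?_
          rw [← mul_sub]
          calc sv i * (pB u i - pB w i) ≤ |sv i * (pB u i - pB w i)| := le_abs_self _
            _ = |sv i| * |pB u i - pB w i| := abs_mul _ _
            _ ≤ Δ * (E * ∑ k ∈ Finset.range M, pB (φk k) i) := by
                refine mul_le_mul (hΔ i) ?_ (abs_nonneg _) hΔ0
                rw [abs_sub_comm]; exact htele i
      _ = Δ * E * ∑ i, ∑ k ∈ Finset.range M, pB (φk k) i := by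
          rw [Finset.mul_sum]; congr 1; funext i; ring
      _ = Δ * E * ∑ k ∈ Finset.range M, ∑ i, pB (φk k) i := by rw [Finset.sum_comm]
      _ = Δ * E * M := by
          rw [Finset.sum_congr rfl fun k _ => pB_sum (φk k)]
          simp
      _ = E * M * Δ := by ring
  have hnum : E * M ≤ 3 * c := by
    have hx1 : 2 * (c / M) ≤ 1 := by
      rw [show 2 * (c / (M:ℝ)) = 2 * c / M by ring, div_le_iff₀ hMpos]
      linarith
    have hx0 : 0 ≤ 2 * (c / M) := by positivity
    have h := exp_sub_one_le_quad hx0 hx1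
    have : E ≤ 2 * (c / M) + (2 * (c / M)) ^ 2 := h
    have h2 : E * M ≤ (2 * (c / M) + (2 * (c / M)) ^ 2) * M :=
      mul_le_mul_of_nonneg_right this (le_of_lt hMpos)
    refine le_trans h2 ?_
    have hcM : c / M * M = c := div_mul_cancel₀ c (ne_of_gt hMpos)
    have : (2 * (c / M) + (2 * (c / M)) ^ 2) * M = 2 * c + 4 * c * (c / M) := by
      field_simp; ring
    rw [this]
    have : 4 * c * (c / M) ≤ c := by
      rcases eq_or_lt_of_le hc0 with h0 | h0
      · simp [← h0]
      · have : c / M ≤ c / (4 * c) := by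
          apply div_le_div_of_nonneg_left (le_of_lt h0) (by linarith) ?_
          · exact hM4c
        calc 4 * c * (c / M) ≤ 4 * c * (c / (4 * c)) :=
              mul_le_mul_of_nonneg_left this (by linarith)
          _ = c := by field_simp
    linarith
  have := le_trans hmain (by nlinarith : E * M * Δ ≤ 3 * c * Δ)
  linarith

lemma map_pi_eq {N : ℕ} {Ω : Type} [MeasurableSpace Ω] (P : Measure Ω) [IsProbabilityMeasure P]
    (ξ : Fin N → Ω → ℝ) (hmeas : ∀ i, Measurable (ξ i))
    (hind : iIndepFun ξ P)
    (hlaw : ∀ i, P.map (ξ i) = expMeasure 1) :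
    P.map (fun ω (i : Fin N) => ξ i ω) = expPi N := by
  haveI : IsProbabilityMeasure (expMeasure 1) := isProbabilityMeasure_expMeasure one_pos
  have hξvec : Measurable (fun ω (i : Fin N) => ξ i ω) :=
    measurable_pi_lambda _ fun i => hmeas i
  refine (Measure.pi_eq fun s hs => ?_).symm
  rw [Measure.map_apply hξvec (MeasurableSet.univ_pi hs)]
  have hpre : (fun ω (i : Fin N) => ξ i ω) ⁻¹' (Set.pi Set.univ s)
      = ⋂ i ∈ (Finset.univ : Finset (Fin N)), ξ i ⁻¹' s i := by
    ext ω; simp [Set.mem_pi]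
  rw [hpre, hind.measure_inter_preimage_eq_mul Finset.univ (fun i _ => hs i)]
  refine Finset.prod_congr rfl fun i _ => ?_
  rw [← hlaw i, Measure.map_apply (hmeas i) (hs i)]

lemma sel_prob {n : ℕ} {Ω : Type} [MeasurableSpace Ω] (P : Measure Ω) [IsProbabilityMeasure P]
    (ξvec : Ω → Fin (n + 2) → ℝ) (hξ : Measurable ξvec) (hlaw : P.map ξvec = expPi (n + 2))
    (φ : Fin (n + 2) → ℝ) (G : Ω → Fin (n + 2)) (hG : Measurable G)
    (hsel : ∀ ω, ξvec ω ∈ Bset φ (G ω)) (i : Fin (n + 2)) :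
    P (G ⁻¹' {i}) = expPi (n + 2) (Bset φ i) := by
  set A : Fin (n + 2) → Set Ω := fun j => ξvec ⁻¹' (Bset φ j) with hA
  have hAeq : ∀ j, P (A j) = expPi (n + 2) (Bset φ j) := by
    intro j
    rw [← hlaw, Measure.map_apply hξ (Bset_measurable φ j)]
  have hnull : ∀ j, j ≠ i → P (A i ∩ A j) = 0 := by
    intro j hj
    have hsub : A i ∩ A j ⊆ ξvec ⁻¹' {x : Fin (n + 2) → ℝ | x i = x j + (φ i - φ j)} := by
      rintro ω ⟨h1, h2⟩
      have ha : φ i - ξvec ω i ≤ φ j - ξvec ω j := h1 j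
      have hb : φ j - ξvec ω j ≤ φ i - ξvec ω i := h2 i
      simp only [Set.mem_preimage, Set.mem_setOf_eq]
      linarith
    refine measure_mono_null hsub ?_
    have heq : P (ξvec ⁻¹' {x : Fin (n + 2) → ℝ | x i = x j + (φ i - φ j)})
        = expPi (n + 2) {x : Fin (n + 2) → ℝ | x i = x j + (φ i - φ j)} := by
      rw [← hlaw, Measure.map_apply hξ
        (measurableSet_eq_fun (measurable_pi_apply i) ((measurable_pi_apply j).add_const _))]
    rw [heq]
    exact tie_null i j hj _
  refine le_antisymm ?_ ?_
  · rw [← hAeq i]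
    refine measure_mono fun ω hω => ?_
    have := hsel ω
    rwa [show G ω = i from hω] at this
  · rw [← hAeq]
    have hcover : A i ⊆ (G ⁻¹' {i}) ∪ ⋃ j ∈ Finset.univ.erase i, (A i ∩ A j) := by
      intro ω hω
      by_cases hGi : G ω = i
      · exact Or.inl hGi
      · exact Or.inr (Set.mem_iUnion.2 ⟨G ω, Set.mem_iUnion.2
          ⟨by simp [hGi], ⟨hω, hsel ω⟩⟩⟩)
    refine le_trans (measure_mono hcover) ?_
    refine le_trans (measure_union_le _ _) ?_
    have : P (⋃ j ∈ Finset.univ.erase i, (A i ∩ A j)) = 0 := by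
      refine measure_biUnion_null_iff ?_ |>.2 fun j hj => hnull j (Finset.mem_erase.1 hj).1
      exact (Finset.univ.erase i).countable_toSet
    rw [this, add_zero]

lemma integral_comp_fin {N : ℕ} {Ω : Type} [MeasurableSpace Ω] (P : Measure Ω)
    [IsProbabilityMeasure P] (G : Ω → Fin N) (hG : Measurable G) (f : Fin N → ℝ) :
    ∫ ω, f (G ω) ∂P = ∑ i, f i * (P (G ⁻¹' {i})).toReal := by
  have hrepr : (fun ω => f (G ω))
      = fun ω => ∑ i, Set.indicator (G ⁻¹' {i}) (fun _ => f i) ω := by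
    funext ω
    rw [Finset.sum_eq_single (G ω)]
    · rw [Set.indicator_of_mem (by simp : ω ∈ G ⁻¹' {G ω})]
    · intro i _ hi
      exact Set.indicator_of_notMem (by simp [Ne.symm hi]) _
    · intro h; exact absurd (Finset.mem_univ _) h
  rw [hrepr, integral_finset_sum]
  · refine Finset.sum_congr rfl fun i _ => ?_
    rw [integral_indicator_const _ (hG (measurableSet_singleton i))]
    rw [smul_eq_mul, mul_comm]
    rfl
  · intro i _
    refine (integrable_indicator_iff (hG (measurableSet_singleton i))).2 ?_
    exact integrableOn_const (measure_ne_top _ _)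

section helpers

variable {N : ℕ} (s : ℕ → Fin N → ℝ) (v0 : ℝ)

lemma sup_abs_nonneg [NeZero N] (j : ℕ) : 0 ≤ ⨆ i, |s j i| :=
  Real.iSup_nonneg fun i => abs_nonneg _

lemma vol_pos [NeZero N] (hv0 : 0 < v0) (r : ℕ) : 0 < vol s v0 r :=
  add_pos_of_pos_of_nonneg hv0 (Finset.sum_nonneg fun j _ => sup_abs_nonneg s j)

lemma vol_mono [NeZero N] {r r' : ℕ} (h : r ≤ r') : vol s v0 r ≤ vol s v0 r' := by
  unfold vol
  exact add_le_add_right (Finset.sum_le_sum_of_subset_of_nonneg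
    (Finset.Icc_subset_Icc_right h) (fun j _ _ => sup_abs_nonneg s j)) v0

lemma cumLoss_split {t : ℕ} (ht : 1 ≤ t) (i : Fin N) :
    cumLoss s t i = cumLoss s (t - 1) i + s t i := by
  unfold cumLoss
  obtain ⟨m, rfl⟩ : ∃ m, t = m + 1 := ⟨t - 1, by omega⟩
  rw [show m + 1 - 1 = m from rfl, Finset.sum_Icc_succ_top (by omega : 1 ≤ m + 1)]

lemma vol_split {t : ℕ} (ht : 1 ≤ t) :
    vol s v0 t = vol s v0 (t - 1) + ⨆ i, |s t i| := by
  unfold vol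
  obtain ⟨m, rfl⟩ : ∃ m, t = m + 1 := ⟨t - 1, by omega⟩
  rw [show m + 1 - 1 = m from rfl, Finset.sum_Icc_succ_top (by omega : 1 ≤ m + 1)]
  ring

lemma dvol_eq_sup {t : ℕ} (ht : 1 ≤ t) : dvol s v0 t = ⨆ i, |s t i| := by
  unfold dvol
  rw [vol_split s v0 ht]
  ring

lemma abs_cumLoss_le [NeZero N] (r : ℕ) (i : Fin N) :
    |cumLoss s r i| ≤ vol s v0 r - v0 := by
  unfold cumLoss vol
  rw [add_sub_cancel_left]
  refine le_trans (Finset.abs_sum_le_sum_abs _ _) (Finset.sum_le_sum fun j _ => ?_)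
  exact le_ciSup (f := fun i => |s j i|) (Set.Finite.bddAbove (Set.finite_range _)) i

end helpers

theorem statement4 {N : ℕ} (hN : 2 ≤ N) (s : ℕ → Fin N → ℝ) (v0 : ℝ) (hv0 : 0 < v0)
    (a : ℝ) (ha : 0 < a) (γ : ℕ → ℝ)
    (hγmono : ∀ t, γ (t + 1) ≤ γ t)
    (hγrange : ∀ t, 1 ≤ t → 0 < γ t ∧ γ t < min (Aconst N a) (Aconst N a)⁻¹)
    (hfluc : ∀ t, 1 ≤ t → fluc s v0 t ≤ γ t)
    (Ω : Type) [MeasurableSpace Ω] (P : Measure Ω)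
    (ξ : Fin N → Ω → ℝ) (I : ℕ → Ω → Fin N)
    (hrun : ProtRun s v0 a γ Ω P ξ I)
    (J : ℕ → Ω → Fin N) (hJmeas : ∀ t, Measurable (J t))
    (hJargmin : ∀ t, 1 ≤ t → ∀ (ω : Ω) (i : Fin N),
      cumLoss s t (J t ω) - ξ (J t ω) ω / epstIFPL s v0 a γ t
        ≤ cumLoss s t i - ξ i ω / epstIFPL s v0 a γ t) :
    ∀ T : ℕ, ∑ t ∈ Finset.Icc 1 T, (∫ ω, s t (I t ω) ∂P)
      ≤ (∑ t ∈ Finset.Icc 1 T, (∫ ω, s t (J t ω) ∂P)) +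
        2 * (Real.exp (3 / a) - 1) *
          ∑ t ∈ Finset.Icc 1 T, γ t ^ (1 - alphat N a γ t) * dvol s v0 t := by
  obtain ⟨hP, hξmeas, hind, hξlaw, hImeas, hIargmin⟩ := hrun
  haveI := hP
  obtain ⟨n, rfl⟩ : ∃ n, N = n + 2 := ⟨N - 2, by omega⟩
  set ξvec : Ω → Fin (n + 2) → ℝ := fun ω i => ξ i ω with hξvec
  have hξvecm : Measurable ξvec := measurable_pi_lambda _ hξmeas
  have hlaw : P.map ξvec = expPi (n + 2) := map_pi_eq P ξ hξmeas hind hξlaw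
  intro T
  have hstep : ∀ t ∈ Finset.Icc 1 T, (∫ ω, s t (I t ω) ∂P)
      ≤ (∫ ω, s t (J t ω) ∂P) + 2 * (Real.exp (3 / a) - 1) *
          (γ t ^ (1 - alphat (n + 2) a γ t) * dvol s v0 t) := by
    intro t htmem
    have ht : 1 ≤ t := (Finset.mem_Icc.1 htmem).1
    set vprev := vol s v0 (t - 1) with hvprev
    set vt := vol s v0 t with hvt
    set Δ := dvol s v0 t with hΔ
    have hvp : 0 < vprev := vol_pos s v0 hv0 _
    have hvtp : 0 < vt := vol_pos s v0 hv0 _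
    have hvle : vprev ≤ vt := vol_mono s v0 (by omega)
    have hΔsup : Δ = ⨆ i, |s t i| := dvol_eq_sup s v0 ht
    have hΔ0 : 0 ≤ Δ := hΔsup ▸ sup_abs_nonneg s t
    have hΔvt : Δ = vt - vprev := rfl
    have hsb : ∀ i, |s t i| ≤ Δ := fun i => hΔsup ▸
      le_ciSup (f := fun i => |s t i|) (Set.Finite.bddAbove (Set.finite_range _)) i
    have hγpos := (hγrange t ht).1
    set μt := muPROT (n + 2) a γ t with hμt
    have hγα : 0 < γ t ^ alphat (n + 2) a γ t := Real.rpow_pos_of_pos hγpos _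
    have hμ : 0 < μt := mul_pos ha hγα
    set ε := epst s v0 a γ t with hε
    set ε' := epstIFPL s v0 a γ t with hε'
    have hεdef : ε = 1 / (μt * vprev) := rfl
    have hε'def : ε' = 1 / (μt * vt) := rfl
    have hεpos : 0 < ε := by rw [hεdef]; positivity
    have hε'pos : 0 < ε' := by rw [hε'def]; positivity
    have hεge : ε' ≤ ε := by
      rw [hεdef, hε'def]
      refine one_div_le_one_div_of_le (by positivity) ?_
      exact mul_le_mul_of_nonneg_left hvle (le_of_lt hμ)
    set u : Fin (n + 2) → ℝ := fun i => ε * cumLoss s (t - 1) i with hu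
    set w : Fin (n + 2) → ℝ := fun i => ε' * cumLoss s t i with hw
    set c := 2 * ε' * Δ with hc
    have hεε' : (ε - ε') * vprev = ε' * Δ := by
      rw [hεdef, hε'def, hΔvt]
      field_simp <;> ring
    have hcb : ∀ i, |u i - w i| ≤ c := by
      intro i
      have hexp : u i - w i = (ε - ε') * cumLoss s (t - 1) i - ε' * s t i := by
        simp only [hu, hw, cumLoss_split s ht i]
        ring
      have hL := abs_cumLoss_le s v0 (t - 1) i
      have hsi := hsb i
      have h1 : |u i - w i| ≤ (ε - ε') * |cumLoss s (t - 1) i| + ε' * |s t i| := by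
        rw [hexp]
        refine le_trans (abs_sub _ _) ?_
        rw [abs_mul, abs_mul, abs_of_nonneg (sub_nonneg.2 hεge), abs_of_nonneg (le_of_lt hε'pos)]
      have h2 : (ε - ε') * |cumLoss s (t - 1) i| ≤ (ε - ε') * vprev := by
        refine mul_le_mul_of_nonneg_left ?_ (sub_nonneg.2 hεge)
        exact le_trans hL (by linarith)
      have h3 : ε' * |s t i| ≤ ε' * Δ := mul_le_mul_of_nonneg_left hsi (le_of_lt hε'pos)
      rw [hc]
      linarith [hεε']
    have hselI : ∀ ω, ξvec ω ∈ Bset u (I t ω) := by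
      intro ω j
      have h0 := hIargmin t ht ω j
      have hx : ∀ y : ℝ, ε * (y / ε) = y := fun y => by field_simp
      have h1 := mul_le_mul_of_nonneg_left h0 (le_of_lt hεpos)
      rw [mul_sub, mul_sub, hx, hx] at h1
      exact h1
    have hselJ : ∀ ω, ξvec ω ∈ Bset w (J t ω) := by
      intro ω j
      have h0 := hJargmin t ht ω j
      have hx : ∀ y : ℝ, ε' * (y / ε') = y := fun y => by field_simp
      have h1 := mul_le_mul_of_nonneg_left h0 (le_of_lt hε'pos)
      rw [mul_sub, mul_sub, hx, hx] at h1
      exact h1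
    have hPI : ∀ i, P (I t ⁻¹' {i}) = expPi (n + 2) (Bset u i) :=
      sel_prob P ξvec hξvecm hlaw u (I t) (hImeas t) hselI
    have hPJ : ∀ i, P (J t ⁻¹' {i}) = expPi (n + 2) (Bset w i) :=
      sel_prob P ξvec hξvecm hlaw w (J t) (hJmeas t) hselJ
    rw [integral_comp_fin P (I t) (hImeas t) (s t), integral_comp_fin P (J t) (hJmeas t) (s t)]
    have hI2 : ∑ i, s t i * (P (I t ⁻¹' {i})).toReal = ∑ i, s t i * pB u i :=
      Finset.sum_congr rfl fun i _ => by rw [pB, ← hPI i]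
    have hJ2 : ∑ i, s t i * (P (J t ⁻¹' {i})).toReal = ∑ i, s t i * pB w i :=
      Finset.sum_congr rfl fun i _ => by rw [pB, ← hPJ i]
    rw [hI2, hJ2]
    have hkey := key_compare u w (s t) Δ c hsb hcb
    refine le_trans hkey ?_
    have hnum : 3 * c * Δ ≤ 2 * (Real.exp (3 / a) - 1) * (γ t ^ (1 - alphat (n + 2) a γ t) * Δ) := by
      set z := γ t ^ (1 - alphat (n + 2) a γ t) with hz
      have hz0 : 0 < z := Real.rpow_pos_of_pos hγpos _
      have hflt : Δ / vt ≤ γ t := hfluc t ht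
      have hε'Δ : ε' * Δ ≤ z / a := by
        have h1 : ε' * Δ = (Δ / vt) * (1 / μt) := by
          rw [hε'def, one_div, mul_inv]; ring
        have h2 : (Δ / vt) * (1 / μt) ≤ γ t * (1 / μt) := by
          refine mul_le_mul_of_nonneg_right hflt (by positivity)
        have h3 : γ t * (1 / μt) = z / a := by
          rw [hμt, hz, muPROT, Real.rpow_sub hγpos, Real.rpow_one]
          rw [one_div, mul_inv]; ring
        rw [h1, ← h3]
        exact h2
      have hea : 3 / a ≤ Real.exp (3 / a) - 1 := by
        have := Real.add_one_le_exp (3 / a)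
        linarith
      calc 3 * c * Δ = 6 * (ε' * Δ) * Δ := by rw [hc]; ring
        _ ≤ 6 * (z / a) * Δ := by
            refine mul_le_mul_of_nonneg_right (by linarith) hΔ0
        _ = 2 * (3 / a) * (z * Δ) := by ring
        _ ≤ 2 * (Real.exp (3 / a) - 1) * (z * Δ) := by
            refine mul_le_mul_of_nonneg_right (by linarith) (by positivity)
    linarith
  calc ∑ t ∈ Finset.Icc 1 T, (∫ ω, s t (I t ω) ∂P)
      ≤ ∑ t ∈ Finset.Icc 1 T, ((∫ ω, s t (J t ω) ∂P) + 2 * (Real.exp (3 / a) - 1) *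
          (γ t ^ (1 - alphat (n + 2) a γ t) * dvol s v0 t)) := Finset.sum_le_sum hstep
    _ = _ := by
        rw [Finset.sum_add_distrib, ← Finset.mul_sum]
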